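/- Let G be a finite graph with minimal right-resolving factor M = M(G) and state map Σ_G. Define I₁ ≈₀ I₂ (for Σ_G(I₁) = Σ_G(I₂)) iff there exist equal-length paths γ = γ₁⋯γ_n, δ = δ₁⋯δ_n in G with s(γ₁) = s(δ₁), t(γ_n) = I₁, t(δ_n) = I₂, and Σ_G(t(γ_i)) = Σ_G(t(δ_i)) for all i, and let ≈ be the transitive closure of ≈₀. Then ≈ is a congruence with respect to any right-resolver Φ: G → M, and the quotient graph G/≈ is bunchy. -/

import Mathlib

/-- A finite directed multigraph. -/
structure FinGraph where
  V : Type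
  E : Type
  [fintV : Fintype V]
  [fintE : Fintype E]
  [decV : DecidableEq V]
  [decE : DecidableEq E]
  src : E → V
  tgt : E → V

attribute [instance] FinGraph.fintV FinGraph.fintE FinGraph.decV FinGraph.decE

/-- A graph homomorphism. -/
structure GHom (G H : FinGraph) where
  eMap : G.E → H.E
  vMap : G.V → H.V
  src_eq : ∀ e, H.src (eMap e) = vMap (G.src e)
  tgt_eq : ∀ e, H.tgt (eMap e) = vMap (G.tgt e)

def GHom.comp {G K H : FinGraph} (Δ : GHom K H) (Ψ : GHom G K) : GHom G H where
  eMap := Δ.eMap ∘ Ψ.eMap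
  vMap := Δ.vMap ∘ Ψ.vMap
  src_eq := fun e => by
    simp only [Function.comp_apply, Δ.src_eq, Ψ.src_eq]
  tgt_eq := fun e => by
    simp only [Function.comp_apply, Δ.tgt_eq, Ψ.tgt_eq]

/-- The restriction of a homomorphism to the outgoing edges of a state. -/
def outMap {G H : FinGraph} (Φ : GHom G H) (I : G.V) :
    {e : G.E // G.src e = I} → {f : H.E // H.src f = Φ.vMap I} :=
  fun e => ⟨Φ.eMap e.1, (Φ.src_eq e.1).trans (congrArg Φ.vMap e.2)⟩

/-- A right-resolver: a surjective homomorphism restricting to a bijection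
on the outgoing edges of each state. -/
def IsRR {G H : FinGraph} (Φ : GHom G H) : Prop :=
  Function.Surjective Φ.vMap ∧ ∀ I : G.V, Function.Bijective (outMap Φ I)

/-- `IsPathFrom H I u`: the edge list `u` is a path in `H` starting at `I`. -/
def IsPathFrom (H : FinGraph) : H.V → List H.E → Prop
  | _, [] => True
  | I, e :: u => H.src e = I ∧ IsPathFrom H (H.tgt e) u

/-- The terminal state of a path starting at `I`. -/
def pathEnd (H : FinGraph) (I : H.V) (u : List H.E) : H.V :=
  u.foldl (fun _ e => H.tgt e) I

/-- One-step transition: `I · a` is the target of the unique edge at `I`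
lifting `a` (when `Φ` is right-resolving and `a` starts at the image of `I`). -/
noncomputable def step {G H : FinGraph} (Φ : GHom G H) (I : G.V) (a : H.E) : G.V :=
  if h : ∃ e : G.E, G.src e = I ∧ Φ.eMap e = a then G.tgt h.choose else I

/-- Transition along a word: `I · u`. -/
noncomputable def transPath {G H : FinGraph} (Φ : GHom G H) (I : G.V) (u : List H.E) : G.V :=
  u.foldl (step Φ) I

/-- The stability relation of a right-resolver. -/
def Stable {G H : FinGraph} (Φ : GHom G H) (I₁ I₂ : G.V) : Prop :=
  Φ.vMap I₁ = Φ.vMap I₂ ∧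
  ∀ u : List H.E, IsPathFrom H (Φ.vMap I₁) u →
    ∃ v : List H.E, IsPathFrom H (pathEnd H (Φ.vMap I₁) u) v ∧
      transPath Φ I₁ (u ++ v) = transPath Φ I₂ (u ++ v)

/-- A right-resolver is synchronizing if each fiber of its state map is a
single stability class. -/
def Synchronizing {G H : FinGraph} (Φ : GHom G H) : Prop :=
  ∀ I₁ I₂ : G.V, Φ.vMap I₁ = Φ.vMap I₂ → Stable Φ I₁ I₂

/-- The fiber of the state map over a state of the codomain. -/
def fiber {G H : FinGraph} (Φ : GHom G H) (I : H.V) : Set G.V := {J | Φ.vMap J = I}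

/-- The image `U · u` of a set of states under transition along a word. -/
noncomputable def setTrans {G H : FinGraph} (Φ : GHom G H) (U : Set G.V)
    (u : List H.E) : Set G.V :=
  (fun J => transPath Φ J u) '' U

/-- A minimal image of a right-resolver. -/
def IsMinImage {G H : FinGraph} (Φ : GHom G H) (U : Set G.V) : Prop :=
  ∃ (I : H.V) (u : List H.E), IsPathFrom H I u ∧ U = setTrans Φ (fiber Φ I) u ∧
    ∀ v : List H.E, IsPathFrom H (pathEnd H I u) v →
      (setTrans Φ U v).ncard = U.ncard

/-- Strong connectedness: a directed path between every ordered pair of states. -/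
def StronglyConnected (G : FinGraph) : Prop :=
  ∀ I J : G.V, ∃ u : List G.E, IsPathFrom G I u ∧ pathEnd G I u = J

def MinimalRR (M : FinGraph) : Prop :=
  ∀ (H : FinGraph) (Φ : GHom M H), IsRR Φ →
    Function.Bijective Φ.eMap ∧ Function.Bijective Φ.vMap

/-- The relation ≈₀: two states are related if they are the ends of two
equal-length paths with a common source whose successive states have the same
images under σ (the state map onto the minimal factor). -/
def approx0 {G M : FinGraph} (σ : G.V → M.V) (I₁ I₂ : G.V) : Prop :=
  ∃ (I₀ : G.V) (γ δ : List G.E), γ.length = δ.length ∧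
    IsPathFrom G I₀ γ ∧ IsPathFrom G I₀ δ ∧
    pathEnd G I₀ γ = I₁ ∧ pathEnd G I₀ δ = I₂ ∧
    ∀ i ≤ γ.length, σ (pathEnd G I₀ (γ.take i)) = σ (pathEnd G I₀ (δ.take i))

section Aux

variable {G M : FinGraph}

lemma pathEnd_append (H : FinGraph) (I : H.V) (u v : List H.E) :
    pathEnd H I (u ++ v) = pathEnd H (pathEnd H I u) v := by
  simp [pathEnd, List.foldl_append]

lemma transPath_append (Φ : GHom G M) (I : G.V) (u v : List M.E) :
    transPath Φ I (u ++ v) = transPath Φ (transPath Φ I u) v := by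
  simp [transPath, List.foldl_append]

lemma isPathFrom_take (H : FinGraph) {I : H.V} {u : List H.E}
    (h : IsPathFrom H I u) (n : ℕ) : IsPathFrom H I (u.take n) := by
  induction u generalizing I n with
  | nil => simp [IsPathFrom]
  | cons a u ih =>
    cases n with
    | zero => exact trivial
    | succ n => exact ⟨h.1, ih h.2 n⟩

lemma isPathFrom_append (H : FinGraph) {I : H.V} {u v : List H.E}
    (h : IsPathFrom H I u) (h' : IsPathFrom H (pathEnd H I u) v) :
    IsPathFrom H I (u ++ v) := by
  induction u generalizing I with
  | nil => exact h'
  | cons a u ih =>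
    refine ⟨h.1, ih h.2 ?_⟩
    simpa [pathEnd] using h'

lemma exists_lift_edge {Φ : GHom G M} (hΦ : IsRR Φ) {I : G.V} {a : M.E}
    (ha : M.src a = Φ.vMap I) :
    ∃ e : G.E, G.src e = I ∧ Φ.eMap e = a := by
  obtain ⟨e, he⟩ := (hΦ.2 I).2 ⟨a, ha⟩
  exact ⟨e.1, e.2, congrArg Subtype.val he⟩

lemma vMap_step {Φ : GHom G M} (hΦ : IsRR Φ) {I : G.V} {a : M.E}
    (ha : M.src a = Φ.vMap I) : Φ.vMap (step Φ I a) = M.tgt a := by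
  have h := exists_lift_edge hΦ ha
  rw [step, dif_pos h, ← Φ.tgt_eq, h.choose_spec.2]

lemma vMap_transPath {Φ : GHom G M} (hΦ : IsRR Φ) {I : G.V} {u : List M.E}
    (hu : IsPathFrom M (Φ.vMap I) u) :
    Φ.vMap (transPath Φ I u) = pathEnd M (Φ.vMap I) u := by
  induction u generalizing I with
  | nil => rfl
  | cons a u ih =>
    have hs := vMap_step hΦ hu.1
    have : IsPathFrom M (Φ.vMap (step Φ I a)) u := by rw [hs]; exact hu.2
    calc Φ.vMap (transPath Φ (step Φ I a) u) = pathEnd M (Φ.vMap (step Φ I a)) u :=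
        ih this
      _ = pathEnd M (Φ.vMap I) (a :: u) := by rw [hs]; rfl

/-- A lift of a word along a right-resolver. -/
noncomputable def liftWord (Φ : GHom G M) : G.V → List M.E → List G.E
  | _, [] => []
  | I, a :: u =>
    if h : ∃ e : G.E, G.src e = I ∧ Φ.eMap e = a then
      h.choose :: liftWord Φ (G.tgt h.choose) u
    else []

lemma liftWord_spec {Φ : GHom G M} (hΦ : IsRR Φ) {I : G.V} {u : List M.E}
    (hu : IsPathFrom M (Φ.vMap I) u) :
    (liftWord Φ I u).length = u.length ∧ IsPathFrom G I (liftWord Φ I u) ∧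
      pathEnd G I (liftWord Φ I u) = transPath Φ I u := by
  induction u generalizing I with
  | nil => exact ⟨rfl, trivial, rfl⟩
  | cons a u ih =>
    have h := exists_lift_edge hΦ hu.1
    have hstep : step Φ I a = G.tgt h.choose := by rw [step, dif_pos h]
    have hpu : IsPathFrom M (Φ.vMap (G.tgt h.choose)) u := by
      rw [← Φ.tgt_eq, h.choose_spec.2]; exact hu.2
    obtain ⟨hl, hp, he⟩ := ih hpu
    refine ⟨?_, ?_, ?_⟩
    · simp [liftWord, dif_pos h, hl]
    · rw [liftWord, dif_pos h]; exact ⟨h.choose_spec.1, hp⟩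
    · rw [liftWord, dif_pos h]
      show pathEnd G (G.tgt h.choose) _ = transPath Φ (step Φ I a) u
      rw [hstep]; exact he

lemma liftWord_take {Φ : GHom G M} (I : G.V) (u : List M.E) (n : ℕ) :
    liftWord Φ I (u.take n) = (liftWord Φ I u).take n := by
  induction u generalizing I n with
  | nil => simp [liftWord]
  | cons a u ih =>
    cases n with
    | zero => simp [liftWord]
    | succ n =>
      by_cases h : ∃ e : G.E, G.src e = I ∧ Φ.eMap e = a
      · simp only [List.take_succ_cons, liftWord, dif_pos h, ih]
      · simp only [List.take_succ_cons, liftWord, dif_neg h, List.take_nil]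

lemma approx0_vMap {σ : G.V → M.V} {I₁ I₂ : G.V} (h : approx0 σ I₁ I₂) :
    σ I₁ = σ I₂ := by
  obtain ⟨I₀, γ, δ, hlen, _, _, hγe, hδe, hσ⟩ := h
  have := hσ γ.length le_rfl
  rwa [List.take_length, hlen, List.take_length, hγe, hδe] at this

lemma transGen_vMap {σ : G.V → M.V} {I₁ I₂ : G.V}
    (h : Relation.TransGen (approx0 σ) I₁ I₂) : σ I₁ = σ I₂ := by
  induction h with
  | single h => exact approx0_vMap h
  | tail _ h ih => exact ih.trans (approx0_vMap h)

lemma approx0_edge {Φ : GHom G M} {I₁ I₂ : G.V}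
    (h : approx0 Φ.vMap I₁ I₂) {e₁ e₂ : G.E} (h₁ : G.src e₁ = I₁) (h₂ : G.src e₂ = I₂)
    (hσ : Φ.vMap (G.tgt e₁) = Φ.vMap (G.tgt e₂)) :
    approx0 Φ.vMap (G.tgt e₁) (G.tgt e₂) := by
  obtain ⟨I₀, γ, δ, hlen, hγ, hδ, hγe, hδe, hs⟩ := h
  refine ⟨I₀, γ ++ [e₁], δ ++ [e₂], by simp [hlen], ?_, ?_, ?_, ?_, ?_⟩
  · exact isPathFrom_append G hγ (by rw [hγe]; exact ⟨h₁, trivial⟩)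
  · exact isPathFrom_append G hδ (by rw [hδe]; exact ⟨h₂, trivial⟩)
  · rw [pathEnd_append]; rfl
  · rw [pathEnd_append]; rfl
  · intro i hi
    rcases Nat.lt_or_ge i (γ.length + 1) with hlt | hge
    · have hle : i ≤ γ.length := Nat.lt_succ_iff.mp hlt
      rw [List.take_append_of_le_length hle, List.take_append_of_le_length (hlen ▸ hle)]
      exact hs i hle
    · have hiγ : i = γ.length + 1 := le_antisymm (by simpa using hi) hge
      have h1 : (γ ++ [e₁]).take i = γ ++ [e₁] := by
        apply List.take_of_length_le; simp [hiγ]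
      have h2 : (δ ++ [e₂]).take i = δ ++ [e₂] := by
        apply List.take_of_length_le; simp [hiγ, ← hlen]
      rw [h1, h2, pathEnd_append, pathEnd_append, hγe, hδe]
      exact hσ

lemma approx0_transPath {Φ : GHom G M} (hΦ : IsRR Φ) {I₁ I₂ : G.V}
    (h : approx0 Φ.vMap I₁ I₂) {u : List M.E} (hu : IsPathFrom M (Φ.vMap I₁) u) :
    approx0 Φ.vMap (transPath Φ I₁ u) (transPath Φ I₂ u) := by
  obtain ⟨I₀, γ, δ, hlen, hγ, hδ, hγe, hδe, hs⟩ := h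
  have hvv : Φ.vMap I₁ = Φ.vMap I₂ :=
    approx0_vMap ⟨I₀, γ, δ, hlen, hγ, hδ, hγe, hδe, hs⟩
  have hu₂ : IsPathFrom M (Φ.vMap I₂) u := hvv ▸ hu
  obtain ⟨hl₁, hp₁, he₁⟩ := liftWord_spec hΦ hu
  obtain ⟨hl₂, hp₂, he₂⟩ := liftWord_spec hΦ hu₂
  refine ⟨I₀, γ ++ liftWord Φ I₁ u, δ ++ liftWord Φ I₂ u,
    by simp [hlen, hl₁, hl₂], ?_, ?_, ?_, ?_, ?_⟩
  · exact isPathFrom_append G hγ (hγe ▸ hp₁)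
  · exact isPathFrom_append G hδ (hδe ▸ hp₂)
  · rw [pathEnd_append, hγe, he₁]
  · rw [pathEnd_append, hδe, he₂]
  · intro i hi
    rcases le_or_gt i γ.length with hle | hlt
    · rw [List.take_append_of_le_length hle, List.take_append_of_le_length (hlen ▸ hle)]
      exact hs i hle
    · have h1 : (γ ++ liftWord Φ I₁ u).take i =
          γ ++ (liftWord Φ I₁ u).take (i - γ.length) := by
        rw [List.take_append, List.take_of_length_le hlt.le]
      have h2 : (δ ++ liftWord Φ I₂ u).take i =
          δ ++ (liftWord Φ I₂ u).take (i - δ.length) := by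
        rw [List.take_append,
          List.take_of_length_le (by rw [← hlen]; exact hlt.le)]
      set j := i - γ.length with hj
      have hj2 : i - δ.length = j := by rw [← hlen]
      have htp : ∀ (I : G.V), IsPathFrom M (Φ.vMap I) u →
          Φ.vMap (pathEnd G I ((liftWord Φ I u).take j)) =
            pathEnd M (Φ.vMap I) (u.take j) := by
        intro I hI
        rw [← liftWord_take]
        have huj : IsPathFrom M (Φ.vMap I) (u.take j) := isPathFrom_take M hI j
        rw [(liftWord_spec hΦ huj).2.2]
        exact vMap_transPath hΦ huj
      rw [h1, h2, hj2, pathEnd_append, pathEnd_append, hγe, hδe, htp I₁ hu, htp I₂ hu₂,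
        hvv]

end Aux

/-- the transitive closure ≈ of ≈₀ is a congruence with respect
to any right-resolver Φ : G → M(G) (it refines the fibers and is preserved by
transitions), and the quotient graph G/≈ is bunchy (stated concretely: two
≈-related states' outgoing edges with the same Σ-image of targets have
≈-related targets). -/
theorem approx_congruence_and_quotient_bunchy {G M : FinGraph}
    (Φ : GHom G M) (hΦ : IsRR Φ) (hM : MinimalRR M) :
    (∀ I₁ I₂ : G.V, Relation.TransGen (approx0 Φ.vMap) I₁ I₂ →
      Φ.vMap I₁ = Φ.vMap I₂ ∧
      ∀ u : List M.E, IsPathFrom M (Φ.vMap I₁) u →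
        Relation.TransGen (approx0 Φ.vMap) (transPath Φ I₁ u) (transPath Φ I₂ u)) ∧
    (∀ I₁ I₂ : G.V, Relation.TransGen (approx0 Φ.vMap) I₁ I₂ →
      ∀ e₁ e₂ : G.E, G.src e₁ = I₁ → G.src e₂ = I₂ →
        Φ.vMap (G.tgt e₁) = Φ.vMap (G.tgt e₂) →
        Relation.TransGen (approx0 Φ.vMap) (G.tgt e₁) (G.tgt e₂)) := by
  constructor
  · intro I₁ I₂ h
    refine ⟨transGen_vMap h, ?_⟩
    intro u hu
    induction h with
    | single h => exact .single (approx0_transPath hΦ h hu)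
    | tail hab h ih =>
      refine ih.tail (approx0_transPath hΦ h ?_)
      rwa [← transGen_vMap hab]
  · intro I₁ I₂ h
    induction h with
    | single h =>
      intro e₁ e₂ h₁ h₂ hσ
      exact .single (approx0_edge h h₁ h₂ hσ)
    | @tail b c hab hbc ih =>
      intro e₁ e₂ h₁ h₂ hσ
      have hsrc : M.src (Φ.eMap e₂) = Φ.vMap b := by
        rw [Φ.src_eq, h₂, ← approx0_vMap hbc]
      obtain ⟨f, hf, hfe⟩ := exists_lift_edge hΦ hsrc
      have hft : Φ.vMap (G.tgt f) = Φ.vMap (G.tgt e₂) := by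
        rw [← Φ.tgt_eq, ← Φ.tgt_eq, hfe]
      exact (ih e₁ f h₁ hf (hσ.trans hft.symm)).tail
        (approx0_edge hbc hf h₂ hft)
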